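/- Suppose E(t) and F(t) (functions of x, for each fixed real t) satisfy (d/dx)E = tE + μ(x)F and (d/dx)F = −tF + μ(x)E, and suppose E(t) = e^{xt} + Σⱼ cⱼ(x)·2 sinh((t−κⱼ)x)/(t−κⱼ) identically in t, with κ₁,…,κₙ distinct reals. Then μ(x) = (−1)ⁿ Σⱼ 2cⱼ(x)e^{κⱼx} and for each j, cⱼ′(x) − κⱼcⱼ(x) = μ(x)dⱼ(x), where the dⱼ are defined by F(t) = (−1)ⁿe^{−xt} + Σⱼ dⱼ(x)·2 sinh((t−κⱼ)x)/(t−κⱼ). -/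

import Mathlib

/-- `sinh((t-κ)x)/(t-κ)`, interpreted as `x` when `t = κ`. -/
noncomputable def sinhc (x t κ : ℝ) : ℝ :=
  if t = κ then x else Real.sinh ((t - κ) * x) / (t - κ)

lemma sinhc_mul (x t κ : ℝ) : (t - κ) * (2 * sinhc x t κ) = 2 * Real.sinh ((t - κ) * x) := by
  unfold sinhc
  by_cases h : t = κ
  · simp [h]
  · have hne : t - κ ≠ 0 := sub_ne_zero.2 h
    rw [if_neg h]
    field_simp

lemma sinhc_hasDerivAt (t κ x : ℝ) :
    HasDerivAt (fun y => sinhc y t κ) (Real.cosh ((t - κ) * x)) x := by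
  unfold sinhc
  by_cases h : t = κ
  · simp only [if_pos h, h, sub_self, zero_mul, Real.cosh_zero]
    exact hasDerivAt_id x
  · simp only [if_neg h]
    have hne : t - κ ≠ 0 := sub_ne_zero.2 h
    have h1 : HasDerivAt (fun y : ℝ => (t - κ) * y) (t - κ) x := by
      simpa using (hasDerivAt_id x).const_mul (t - κ)
    have h2 : HasDerivAt (fun y : ℝ => Real.sinh ((t - κ) * y))
        (Real.cosh ((t - κ) * x) * (t - κ)) x := by
      exact (Real.hasDerivAt_sinh ((t - κ) * x)).comp x h1
    have h3 := h2.div_const (t - κ)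
    have : Real.cosh ((t - κ) * x) * (t - κ) / (t - κ) = Real.cosh ((t - κ) * x) := by
      field_simp
    rwa [this] at h3

lemma cosh_eq_aux (x t κ : ℝ) :
    2 * Real.cosh ((t - κ) * x) = (t - κ) * (2 * sinhc x t κ)
      + 2 * Real.exp (κ * x) * Real.exp (-(x * t)) := by
  rw [sinhc_mul]
  have h1 : Real.exp (κ * x) * Real.exp (-(x * t)) = Real.exp (-((t - κ) * x)) := by
    rw [← Real.exp_add]; exact congrArg Real.exp (by ring)
  have h2 := Real.cosh_sub_sinh ((t - κ) * x)
  linear_combination 2 * h2 - 2 * h1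

lemma poly_eq_zero_of_tendsto_zero (Q : Polynomial ℝ)
    (h : Filter.Tendsto (fun t => Q.eval t) Filter.atTop (nhds 0)) : Q = 0 := by
  by_cases hd : 0 < Q.degree
  · exact absurd (Polynomial.abs_tendsto_atTop Q hd)
      ((by simpa using h.abs : Filter.Tendsto (fun t => |Q.eval t|) Filter.atTop
        (nhds 0)).not_tendsto (disjoint_nhds_atTop (0:ℝ)))
  · have hQ := Polynomial.eq_C_of_degree_le_zero (not_lt.1 hd)
    rw [hQ] at h ⊢
    simp only [Polynomial.eval_C] at h
    rw [(tendsto_nhds_unique h tendsto_const_nhds).symm, map_zero]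

open Finset in
lemma indep_lemma {n : ℕ} (x : ℝ) (hx : 0 < x) (κ : Fin n → ℝ) (hκ : Function.Injective κ)
    (a : ℝ) (b : Fin n → ℝ)
    (h : ∀ t, a * Real.exp (-(x * t)) + ∑ j, b j * (2 * sinhc x t (κ j)) = 0) :
    a = 0 ∧ ∀ j, b j = 0 := by
  classical
  set Q : Polynomial ℝ := ∑ j, Polynomial.C (b j * Real.exp (-(κ j * x))) *
      ∏ i ∈ univ.erase j, (Polynomial.X - Polynomial.C (κ i)) with hQdef
  set P : Polynomial ℝ := Polynomial.C a * ∏ i, (Polynomial.X - Polynomial.C (κ i)) -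
      ∑ j, Polynomial.C (b j * Real.exp (κ j * x)) *
      ∏ i ∈ univ.erase j, (Polynomial.X - Polynomial.C (κ i)) with hPdef
  have hQeval : ∀ t, Q.eval t = ∑ j, b j * Real.exp (-(κ j * x)) *
      ∏ i ∈ univ.erase j, (t - κ i) := by
    intro t
    simp [hQdef, Polynomial.eval_finset_sum, Polynomial.eval_prod]
  have hPeval : ∀ t, P.eval t = a * (∏ i, (t - κ i)) - ∑ j, b j * Real.exp (κ j * x) *
      ∏ i ∈ univ.erase j, (t - κ i) := by
    intro t
    simp [hPdef, Polynomial.eval_finset_sum, Polynomial.eval_prod]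
  have hmain : ∀ t, P.eval t + Real.exp (2 * x * t) * Q.eval t = 0 := by
    intro t
    have h0 := congrArg (fun z => z * (Real.exp (x * t) * ∏ i, (t - κ i))) (h t)
    simp only [add_mul, zero_mul] at h0
    rw [Finset.sum_mul] at h0
    have hterms : ∀ j ∈ univ, (b j * (2 * sinhc x t (κ j))) *
        (Real.exp (x * t) * ∏ i, (t - κ i)) =
        b j * (Real.exp (2 * x * t) * Real.exp (-(κ j * x)) - Real.exp (κ j * x)) *
        ∏ i ∈ univ.erase j, (t - κ i) := by
      intro j _
      rw [← Finset.mul_prod_erase univ (fun i => t - κ i) (Finset.mem_univ j)]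
      have hs := sinhc_mul x t (κ j)
      have e1 : Real.exp (x * t) * Real.exp ((t - κ j) * x) =
          Real.exp (2 * x * t) * Real.exp (-(κ j * x)) := by
        rw [← Real.exp_add, ← Real.exp_add]; exact congrArg Real.exp (by ring)
      have e2 : Real.exp (x * t) * Real.exp (-((t - κ j) * x)) = Real.exp (κ j * x) := by
        rw [← Real.exp_add]; exact congrArg Real.exp (by ring)
      have he : Real.exp (x * t) * (2 * Real.sinh ((t - κ j) * x)) =
          Real.exp (2 * x * t) * Real.exp (-(κ j * x)) - Real.exp (κ j * x) := by
        rw [Real.sinh_eq]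
        linear_combination e1 - e2
      linear_combination b j * Real.exp (x * t) * (∏ i ∈ univ.erase j, (t - κ i)) * hs +
        b j * (∏ i ∈ univ.erase j, (t - κ i)) * he
    rw [Finset.sum_congr rfl hterms] at h0
    have hsplit : ∀ j ∈ univ, b j * (Real.exp (2 * x * t) * Real.exp (-(κ j * x)) -
        Real.exp (κ j * x)) * ∏ i ∈ univ.erase j, (t - κ i) =
        Real.exp (2 * x * t) * (b j * Real.exp (-(κ j * x)) * ∏ i ∈ univ.erase j, (t - κ i)) -
        b j * Real.exp (κ j * x) * ∏ i ∈ univ.erase j, (t - κ i) := fun j _ => by ring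
    rw [Finset.sum_congr rfl hsplit, Finset.sum_sub_distrib] at h0
    have hexp : Real.exp (-(x * t)) * Real.exp (x * t) = 1 := by
      rw [← Real.exp_add]; simp
    rw [hPeval, hQeval, Finset.mul_sum]
    linear_combination h0 - a * (∏ i, (t - κ i)) * hexp
  -- Q tends to 0 at infinity
  set R : Polynomial ℝ := P.comp (Polynomial.C (1 / (2 * x)) * Polynomial.X) with hRdef
  have hxne : (2 * x) ≠ 0 := by positivity
  have hReval : ∀ t, R.eval (2 * x * t) = P.eval t := by
    intro t
    rw [hRdef, Polynomial.eval_comp]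
    congr 1
    rw [Polynomial.eval_mul, Polynomial.eval_C, Polynomial.eval_X]
    field_simp
  have hQt : ∀ t, Q.eval t = -(R.eval (2 * x * t) / Real.exp (2 * x * t)) := by
    intro t
    have h0 := hmain t
    have hne := Real.exp_ne_zero (2 * x * t)
    rw [hReval]
    field_simp
    linarith [h0]
  have htend : Filter.Tendsto (fun t => Q.eval t) Filter.atTop (nhds 0) := by
    have hcomp : Filter.Tendsto (fun t : ℝ => 2 * x * t) Filter.atTop Filter.atTop := by
      exact Filter.Tendsto.const_mul_atTop (by positivity) Filter.tendsto_id
    have := (R.tendsto_div_exp_atTop.comp hcomp).neg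
    simp only [neg_zero] at this
    exact this.congr (fun t => (hQt t).symm)
  have hQ0 : Q = 0 := poly_eq_zero_of_tendsto_zero Q htend
  have hb : ∀ k, b k = 0 := by
    intro k
    have hz : Q.eval (κ k) = 0 := by rw [hQ0]; simp
    rw [hQeval] at hz
    rw [Finset.sum_eq_single k (fun j _ hjk => by
        apply mul_eq_zero_of_right
        exact Finset.prod_eq_zero (Finset.mem_erase.2 ⟨hjk.symm, Finset.mem_univ k⟩) (sub_self _))
      (fun hk => absurd (Finset.mem_univ k) hk)] at hz
    have hprodne : (∏ i ∈ univ.erase k, (κ k - κ i)) ≠ 0 := by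
      rw [Finset.prod_ne_zero_iff]
      intro i hi
      exact sub_ne_zero.2 fun hcontra => (Finset.mem_erase.1 hi).1 (hκ hcontra).symm
    have hexpne : Real.exp (-(κ k * x)) ≠ 0 := Real.exp_ne_zero _
    rcases mul_eq_zero.1 hz with h1 | h1
    · rcases mul_eq_zero.1 h1 with h2 | h2
      · exact h2
      · exact absurd h2 hexpne
    · exact absurd h1 hprodne
  constructor
  · have hP0 : P = 0 := by
      apply Polynomial.funext
      intro r
      have := hmain r
      rw [hQ0] at this
      simpa using this
    have hsum0 : (∑ j, Polynomial.C (b j * Real.exp (κ j * x)) *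
        ∏ i ∈ univ.erase j, (Polynomial.X - Polynomial.C (κ i))) = 0 :=
      Finset.sum_eq_zero fun j _ => by rw [hb j]; simp
    rw [hPdef, hsum0, sub_zero] at hP0
    have hmono : (∏ i, (Polynomial.X - Polynomial.C (κ i)) : Polynomial ℝ).Monic :=
      Polynomial.monic_prod_of_monic _ _ fun i _ => Polynomial.monic_X_sub_C _
    rcases mul_eq_zero.1 hP0 with h1 | h1
    · exact Polynomial.C_eq_zero.1 h1
    · exact absurd h1 hmono.ne_zero
  · exact hb

theorem mu_formula_and_c_ode {n : ℕ} (κ : Fin n → ℝ) (hκ : Function.Injective κ)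
    (E F : ℝ → ℝ → ℝ) (c d : Fin n → ℝ → ℝ) (μ : ℝ → ℝ)
    (hc : ∀ j, Differentiable ℝ (c j)) (hd : ∀ j, Differentiable ℝ (d j))
    (hE : ∀ x t, deriv (fun y => E y t) x = t * E x t + μ x * F x t)
    (hF : ∀ x t, deriv (fun y => F y t) x = -t * F x t + μ x * E x t)
    (hEexp : ∀ x t, E x t = Real.exp (x * t) + ∑ j, c j x * (2 * sinhc x t (κ j)))
    (hFexp : ∀ x t, F x t = (-1 : ℝ) ^ n * Real.exp (-(x * t))
        + ∑ j, d j x * (2 * sinhc x t (κ j))) :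
    ∀ x : ℝ, 0 < x →
      μ x = (-1 : ℝ) ^ n * ∑ j, 2 * c j x * Real.exp (κ j * x)
      ∧ ∀ j, deriv (c j) x - κ j * c j x = μ x * d j x := by
  intro x hx
  have key : ∀ t, ((∑ j, 2 * c j x * Real.exp (κ j * x)) - (-1 : ℝ) ^ n * μ x) *
      Real.exp (-(x * t)) +
      ∑ j, (deriv (c j) x - κ j * c j x - μ x * d j x) * (2 * sinhc x t (κ j)) = 0 := by
    intro t
    have hD : deriv (fun y => E y t) x = Real.exp (x * t) * t +
        ∑ j, (deriv (c j) x * (2 * sinhc x t (κ j)) +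
          c j x * (2 * Real.cosh ((t - κ j) * x))) := by
      have hfun : (fun y => E y t) =
          fun y => Real.exp (y * t) + ∑ j, c j y * (2 * sinhc y t (κ j)) :=
        funext fun y => hEexp y t
      rw [hfun]
      have h1 : HasDerivAt (fun y : ℝ => Real.exp (y * t)) (Real.exp (x * t) * t) x := by
        simpa using ((hasDerivAt_id x).mul_const t).exp
      have h2 : HasDerivAt (fun y : ℝ => ∑ j, c j y * (2 * sinhc y t (κ j)))
          (∑ j, (deriv (c j) x * (2 * sinhc x t (κ j)) +
            c j x * (2 * Real.cosh ((t - κ j) * x)))) x := by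
        apply HasDerivAt.fun_sum
        intro j _
        exact ((hc j x).hasDerivAt).mul ((sinhc_hasDerivAt t (κ j) x).const_mul 2)
      exact (h1.add h2).deriv
    have h2 := hE x t
    rw [hD, hEexp x t, hFexp x t] at h2
    have hsum : ∑ j, (deriv (c j) x * (2 * sinhc x t (κ j)) +
        c j x * (2 * Real.cosh ((t - κ j) * x))) =
        t * (∑ j, c j x * (2 * sinhc x t (κ j))) +
        μ x * (∑ j, d j x * (2 * sinhc x t (κ j))) +
        (∑ j, (deriv (c j) x - κ j * c j x - μ x * d j x) * (2 * sinhc x t (κ j))) +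
        (∑ j, 2 * c j x * Real.exp (κ j * x)) * Real.exp (-(x * t)) := by
      rw [Finset.mul_sum, Finset.mul_sum, Finset.sum_mul, ← Finset.sum_add_distrib,
        ← Finset.sum_add_distrib, ← Finset.sum_add_distrib]
      refine Finset.sum_congr rfl fun j _ => ?_
      have hco := cosh_eq_aux x t (κ j)
      linear_combination c j x * hco
    rw [hsum] at h2
    linear_combination h2
  obtain ⟨ha, hb⟩ := indep_lemma x hx κ hκ _ _ key
  have hsq : ((-1 : ℝ) ^ n) * ((-1 : ℝ) ^ n) = 1 := by
    rw [← pow_add]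
    simp [pow_add, ← two_mul, pow_mul]
  constructor
  · linear_combination (-((-1 : ℝ) ^ n)) * ha - μ x * hsq
  · intro j
    have := hb j
    linarith [this]
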